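/- Fix 0 < β ≤ 1, and set C₀ = π²/6 − 5/4 and C₁ = π²/6 − 1. Let f : (−1,1) → ℝ be nonnegative, even (f(−x) = f(x)), and nondecreasing on [0,1). Then for every x ∈ (−1,1): β·C₀·f(0) ≤ T_β f(x) − (β/(2−|x|)²)·f(β/(2−|x|)) ≤ β·C₁·f(β/2), where in particular the defining series for T_β f(x) converges. -/

import Mathlib

open Real

/-- The subtransfer operator `T_β` of the Gauss-type map `x ↦ {-β/x} mod 2ℤ`. -/
noncomputable def Tsub (β : ℝ) (f : ℝ → ℝ) (x : ℝ) : ℝ :=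
  ∑' j : {j : ℤ // j ≠ 0},
    (β / (2 * ((j : ℤ) : ℝ) + x) ^ 2) * f (-β / (2 * ((j : ℤ) : ℝ) + x))

section Stmt12Aux

lemma stmt12_basel1 : HasSum (fun n : ℕ => (1:ℝ) / ((n:ℝ)+1)^2) (π^2/6) := by
  have h := (hasSum_nat_add_iff' (f := fun n : ℕ => (1:ℝ) / (n:ℝ)^2) 1).mpr hasSum_zeta_two
  simpa using h

lemma stmt12_even2 : HasSum (fun n : ℕ => (1:ℝ) / (2*(n:ℝ)+2)^2) (π^2/24) := by
  have h := stmt12_basel1.div_const 4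
  have he : (fun n : ℕ => (1:ℝ) / ((n:ℝ)+1)^2 / 4) = (fun n : ℕ => (1:ℝ) / (2*(n:ℝ)+2)^2) := by
    funext n
    have hn : ((n:ℝ)+1) ≠ 0 := by positivity
    field_simp; ring
  rw [he] at h
  convert h using 1
  · rfl
  ring

lemma stmt12_odd1 : HasSum (fun n : ℕ => (1:ℝ) / (2*(n:ℝ)+1)^2) (π^2/8) := by
  set f : ℕ → ℝ := fun n => (1:ℝ) / ((n:ℝ)+1)^2 with hf
  have he_eq : (fun k : ℕ => f (2*k)) = (fun k : ℕ => (1:ℝ) / (2*(k:ℝ)+1)^2) := by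
    funext k; simp only [hf]; push_cast; ring_nf
  have ho_eq : (fun k : ℕ => f (2*k+1)) = (fun k : ℕ => (1:ℝ) / (2*(k:ℝ)+2)^2) := by
    funext k; simp only [hf]; push_cast; ring_nf
  have hSe : Summable fun k : ℕ => f (2*k) := by
    rw [he_eq]
    apply Summable.of_nonneg_of_le (fun k => by positivity) _ stmt12_basel1.summable
    intro k
    apply one_div_le_one_div_of_le (by positivity)
    have hk : (0:ℝ) ≤ (k:ℝ) := Nat.cast_nonneg k
    nlinarith [hk]
  have hSo : Summable fun k : ℕ => f (2*k+1) := by rw [ho_eq]; exact stmt12_even2.summable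
  have h := tsum_even_add_odd hSe hSo
  rw [stmt12_basel1.tsum_eq] at h
  rw [ho_eq, stmt12_even2.tsum_eq] at h
  have : ∑' k : ℕ, f (2*k) = π^2/8 := by linarith
  rw [he_eq] at this hSe
  exact this ▸ hSe.hasSum

lemma stmt12_odd3 : HasSum (fun n : ℕ => (1:ℝ) / (2*(n:ℝ)+3)^2) (π^2/8 - 1) := by
  have h := (hasSum_nat_add_iff' (f := fun n : ℕ => (1:ℝ) / (2*(n:ℝ)+1)^2) 1).mpr stmt12_odd1
  simp only [Finset.range_one, Finset.sum_singleton, Nat.cast_zero, Nat.cast_add,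
    Nat.cast_one] at h
  norm_num at h
  convert h using 1
  · rfl
  funext n; ring_nf

lemma stmt12_even4 : HasSum (fun n : ℕ => (1:ℝ) / (2*(n:ℝ)+4)^2) (π^2/24 - 1/4) := by
  have h := (hasSum_nat_add_iff' (f := fun n : ℕ => (1:ℝ) / (2*(n:ℝ)+2)^2) 1).mpr stmt12_even2
  simp only [Finset.range_one, Finset.sum_singleton, Nat.cast_zero] at h
  norm_num at h
  convert h using 1
  · rfl
  funext n; ring_nf

/-- Upper comparison weights. -/
noncomputable def stmt12_ub : ℤ → ℝ := fun j =>
  if j = 0 ∨ j = -1 then 0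
  else if 0 < j then 1 / (2*(j:ℝ))^2 else 1 / (2*(j:ℝ)+1)^2

/-- Lower comparison weights. -/
noncomputable def stmt12_lb : ℤ → ℝ := fun j =>
  if j = 0 ∨ j = -1 then 0
  else if 0 < j then 1 / (2*(j:ℝ)+1)^2 else 1 / (2*(j:ℝ))^2

lemma stmt12_hasSum_ub : HasSum stmt12_ub (π^2/6 - 1) := by
  have hpos : HasSum (fun n : ℕ => stmt12_ub n) (π^2/24) := by
    have h : (fun n : ℕ => stmt12_ub ((n+1 : ℕ) : ℤ)) = (fun n : ℕ => (1:ℝ) / (2*(n:ℝ)+2)^2) := by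
      funext n
      have hc : ¬(((n+1 : ℕ) : ℤ) = 0 ∨ ((n+1 : ℕ) : ℤ) = -1) := by omega
      have h3 : (0:ℤ) < ((n+1 : ℕ) : ℤ) := by positivity
      simp only [stmt12_ub]
      rw [if_neg hc, if_pos h3]
      push_cast; ring_nf
    have := (hasSum_nat_add_iff (f := fun n : ℕ => stmt12_ub n) 1).mp (h ▸ stmt12_even2)
    simpa [stmt12_ub] using this
  have hneg : HasSum (fun n : ℕ => stmt12_ub (-((n:ℤ)+1))) (π^2/8 - 1) := by
    have h : (fun n : ℕ => (fun m : ℕ => stmt12_ub (-((m:ℤ)+1))) (n+1)) =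
        (fun n : ℕ => (1:ℝ) / (2*(n:ℝ)+3)^2) := by
      funext n
      have hc : ¬((-(((n+1:ℕ):ℤ)+1)) = 0 ∨ (-(((n+1:ℕ):ℤ)+1)) = -1) := by omega
      have h3 : ¬ (0:ℤ) < (-(((n+1:ℕ):ℤ)+1)) := by omega
      simp only [stmt12_ub]
      rw [if_neg hc, if_neg h3]
      push_cast; ring_nf
    have := (hasSum_nat_add_iff (f := fun m : ℕ => stmt12_ub (-((m:ℤ)+1))) 1).mp
      (h ▸ stmt12_odd3)
    simpa [stmt12_ub] using this
  have := hpos.of_nat_of_neg_add_one hneg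
  convert this using 1
  ring

lemma stmt12_hasSum_lb : HasSum stmt12_lb (π^2/6 - 5/4) := by
  have hpos : HasSum (fun n : ℕ => stmt12_lb n) (π^2/8 - 1) := by
    have h : (fun n : ℕ => stmt12_lb ((n+1 : ℕ) : ℤ)) = (fun n : ℕ => (1:ℝ) / (2*(n:ℝ)+3)^2) := by
      funext n
      have hc : ¬(((n+1 : ℕ) : ℤ) = 0 ∨ ((n+1 : ℕ) : ℤ) = -1) := by omega
      have h3 : (0:ℤ) < ((n+1 : ℕ) : ℤ) := by positivity
      simp only [stmt12_lb]
      rw [if_neg hc, if_pos h3]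
      push_cast; ring_nf
    have := (hasSum_nat_add_iff (f := fun n : ℕ => stmt12_lb n) 1).mp (h ▸ stmt12_odd3)
    simpa [stmt12_lb] using this
  have hneg : HasSum (fun n : ℕ => stmt12_lb (-((n:ℤ)+1))) (π^2/24 - 1/4) := by
    have h : (fun n : ℕ => (fun m : ℕ => stmt12_lb (-((m:ℤ)+1))) (n+1)) =
        (fun n : ℕ => (1:ℝ) / (2*(n:ℝ)+4)^2) := by
      funext n
      have hc : ¬((-(((n+1:ℕ):ℤ)+1)) = 0 ∨ (-(((n+1:ℕ):ℤ)+1)) = -1) := by omega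
      have h3 : ¬ (0:ℤ) < (-(((n+1:ℕ):ℤ)+1)) := by omega
      simp only [stmt12_lb]
      rw [if_neg hc, if_neg h3]
      push_cast; ring_nf
    have := (hasSum_nat_add_iff (f := fun m : ℕ => stmt12_lb (-((m:ℤ)+1))) 1).mp
      (h ▸ stmt12_even4)
    simpa [stmt12_lb] using this
  have := hpos.of_nat_of_neg_add_one hneg
  convert this using 1
  ring

lemma stmt12_lb_nonneg (j : ℤ) : 0 ≤ stmt12_lb j := by
  simp only [stmt12_lb]
  split
  · exact le_refl 0
  · split <;> positivity

/-- The summand extended to all of `ℤ` (zero at `j = 0`). -/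
noncomputable def stmt12_Fz (β : ℝ) (f : ℝ → ℝ) (x : ℝ) : ℤ → ℝ := fun j =>
  if j = 0 then 0 else (β / (2*(j:ℝ)+x)^2) * f (-β / (2*(j:ℝ)+x))

/-- The summand with the special term at `j = -1` removed. -/
noncomputable def stmt12_Fz' (β : ℝ) (f : ℝ → ℝ) (x : ℝ) : ℤ → ℝ := fun j =>
  if j = -1 then 0 else stmt12_Fz β f x j

lemma stmt12_term_bound {β : ℝ} (hβ0 : 0 < β) (hβ1 : β ≤ 1) {f : ℝ → ℝ}
    (hnn : ∀ x ∈ Set.Ioo (-1 : ℝ) 1, 0 ≤ f x)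
    (hmono : MonotoneOn f (Set.Ico (0 : ℝ) 1))
    {d p q : ℝ} (hp : 0 < p) (hpd : p ≤ d) (hdq : d ≤ q) (h2 : 2 ≤ d) :
    β * f 0 * (1/q^2) ≤ (β/d^2) * f (β/d) ∧ (β/d^2) * f (β/d) ≤ β * f (β/2) * (1/p^2) := by
  have hd0 : 0 < d := by linarith
  have hq0 : 0 < q := by linarith
  have ha0 : 0 ≤ β/d := by positivity
  have ha2 : β/d ≤ β/2 := by gcongr <;> linarith
  have hb2 : β/2 < 1 := by linarith
  have ha1 : β/d < 1 := by linarith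
  have mem0 : (0:ℝ) ∈ Set.Ico (0:ℝ) 1 := by norm_num
  have mema : β/d ∈ Set.Ico (0:ℝ) 1 := ⟨ha0, ha1⟩
  have memh : β/2 ∈ Set.Ico (0:ℝ) 1 := ⟨by positivity, hb2⟩
  have hf1 : f 0 ≤ f (β/d) := hmono mem0 mema ha0
  have hf2 : f (β/d) ≤ f (β/2) := hmono mema memh ha2
  have hf00 : 0 ≤ f 0 := hnn 0 (by norm_num)
  have hfh : 0 ≤ f (β/2) := hnn (β/2) ⟨by linarith, hb2⟩
  have cq : β/q^2 ≤ β/d^2 := by gcongr <;> nlinarith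
  have cp : β/d^2 ≤ β/p^2 := by gcongr <;> nlinarith
  constructor
  · calc β * f 0 * (1/q^2) = (β/q^2) * f 0 := by ring
      _ ≤ (β/d^2) * f 0 := mul_le_mul_of_nonneg_right cq hf00
      _ ≤ (β/d^2) * f (β/d) := mul_le_mul_of_nonneg_left hf1 (by positivity)
  · calc (β/d^2) * f (β/d) ≤ (β/d^2) * f (β/2) := mul_le_mul_of_nonneg_left hf2 (by positivity)
      _ ≤ (β/p^2) * f (β/2) := mul_le_mul_of_nonneg_right cp hfh
      _ = β * f (β/2) * (1/p^2) := by ring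

lemma stmt12_pointwise {β : ℝ} (hβ0 : 0 < β) (hβ1 : β ≤ 1) {f : ℝ → ℝ}
    (hnn : ∀ x ∈ Set.Ioo (-1 : ℝ) 1, 0 ≤ f x)
    (heven : ∀ x ∈ Set.Ioo (-1 : ℝ) 1, f (-x) = f x)
    (hmono : MonotoneOn f (Set.Ico (0 : ℝ) 1))
    {x : ℝ} (hx0 : 0 ≤ x) (hx1 : x < 1) (j : ℤ) :
    β * f 0 * stmt12_lb j ≤ stmt12_Fz' β f x j ∧
      stmt12_Fz' β f x j ≤ β * f (β/2) * stmt12_ub j := by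
  by_cases hj : j = 0 ∨ j = -1
  · have hF0 : stmt12_Fz' β f x j = 0 := by
      rcases hj with h | h <;> subst h <;> simp [stmt12_Fz', stmt12_Fz]
    rw [hF0]
    simp only [stmt12_lb, stmt12_ub, if_pos hj]
    norm_num
  · push_neg at hj
    obtain ⟨hj0, hjm1⟩ := hj
    have hFe : stmt12_Fz' β f x j = (β / (2*(j:ℝ)+x)^2) * f (-β / (2*(j:ℝ)+x)) := by
      simp only [stmt12_Fz', stmt12_Fz]
      rw [if_neg hjm1, if_neg hj0]
    rcases lt_or_ge 0 j with hpos | hneg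
    · have hj1' : (1:ℝ) ≤ (j:ℝ) := by exact_mod_cast hpos
      have hp : (0:ℝ) < 2*(j:ℝ) := by linarith
      have hpd : 2*(j:ℝ) ≤ 2*(j:ℝ)+x := by linarith
      have hdq : 2*(j:ℝ)+x ≤ 2*(j:ℝ)+1 := by linarith
      have h2 : (2:ℝ) ≤ 2*(j:ℝ)+x := by linarith
      have hb := stmt12_term_bound hβ0 hβ1 hnn hmono hp hpd hdq h2
      have hd0 : (0:ℝ) < 2*(j:ℝ)+x := by linarith
      have harg : f (-β / (2*(j:ℝ)+x)) = f (β/(2*(j:ℝ)+x)) := by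
        rw [neg_div]
        apply heven
        constructor
        · have : (0:ℝ) < β/(2*(j:ℝ)+x) := by positivity
          linarith
        · rw [div_lt_one hd0]; linarith
      rw [hFe, harg]
      have hl : stmt12_lb j = 1/(2*(j:ℝ)+1)^2 := by
        simp only [stmt12_lb]
        rw [if_neg (by omega : ¬(j = 0 ∨ j = -1)), if_pos hpos]
      have hu : stmt12_ub j = 1/(2*(j:ℝ))^2 := by
        simp only [stmt12_ub]
        rw [if_neg (by omega : ¬(j = 0 ∨ j = -1)), if_pos hpos]
      rw [hl, hu]
      exact hb
    · have hj2 : j ≤ -2 := by omega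
      have hj2' : (j:ℝ) ≤ -2 := by exact_mod_cast hj2
      have hp : (0:ℝ) < -(2*(j:ℝ)+1) := by linarith
      have hpd : -(2*(j:ℝ)+1) ≤ -(2*(j:ℝ)+x) := by linarith
      have hdq : -(2*(j:ℝ)+x) ≤ -(2*(j:ℝ)) := by linarith
      have h2 : (2:ℝ) ≤ -(2*(j:ℝ)+x) := by linarith
      have hb := stmt12_term_bound hβ0 hβ1 hnn hmono hp hpd hdq h2
      have he1 : (β / (2*(j:ℝ)+x)^2) = β / (-(2*(j:ℝ)+x))^2 := by ring_nf
      have he2 : -β / (2*(j:ℝ)+x) = β / (-(2*(j:ℝ)+x)) := by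
        rw [neg_div, div_neg]
      have hl : stmt12_lb j = 1/(-(2*(j:ℝ)))^2 := by
        simp only [stmt12_lb]
        rw [if_neg (by omega : ¬(j = 0 ∨ j = -1)), if_neg (by omega : ¬(0:ℤ) < j)]
        ring_nf
      have hu : stmt12_ub j = 1/(-(2*(j:ℝ)+1))^2 := by
        simp only [stmt12_ub]
        rw [if_neg (by omega : ¬(j = 0 ∨ j = -1)), if_neg (by omega : ¬(0:ℤ) < j)]
        ring_nf
      rw [hFe, he1, he2, hl, hu]
      exact hb

lemma stmt12_key {β : ℝ} (hβ0 : 0 < β) (hβ1 : β ≤ 1) {f : ℝ → ℝ}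
    (hnn : ∀ x ∈ Set.Ioo (-1 : ℝ) 1, 0 ≤ f x)
    (heven : ∀ x ∈ Set.Ioo (-1 : ℝ) 1, f (-x) = f x)
    (hmono : MonotoneOn f (Set.Ico (0 : ℝ) 1))
    {x : ℝ} (hx0 : 0 ≤ x) (hx1 : x < 1) :
    Summable (fun j : {j : ℤ // j ≠ 0} =>
        (β / (2 * ((j : ℤ) : ℝ) + x) ^ 2) * f (-β / (2 * ((j : ℤ) : ℝ) + x))) ∧
      β * (π ^ 2 / 6 - 5 / 4) * f 0 ≤
        Tsub β f x - (β / (2 - x) ^ 2) * f (β / (2 - x)) ∧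
      Tsub β f x - (β / (2 - x) ^ 2) * f (β / (2 - x)) ≤
        β * (π ^ 2 / 6 - 1) * f (β / 2) := by
  have hpt := fun j => stmt12_pointwise hβ0 hβ1 hnn heven hmono hx0 hx1 j
  have hf00 : 0 ≤ f 0 := hnn 0 (by norm_num)
  have hb2 : β/2 < 1 := by linarith
  have hfh : 0 ≤ f (β/2) := hnn (β/2) ⟨by linarith, hb2⟩
  have hF'nn : ∀ j, 0 ≤ stmt12_Fz' β f x j := by
    intro j
    have hl := stmt12_lb_nonneg j
    have h0 : 0 ≤ β * f 0 * stmt12_lb j := by positivity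
    exact le_trans h0 (hpt j).1
  have hub := stmt12_hasSum_ub.mul_left (β * f (β/2))
  have hlb := stmt12_hasSum_lb.mul_left (β * f 0)
  have hSF' : Summable (stmt12_Fz' β f x) :=
    Summable.of_nonneg_of_le hF'nn (fun j => (hpt j).2) hub.summable
  have hlow : β * f 0 * (π^2/6 - 5/4) ≤ ∑' j, stmt12_Fz' β f x j :=
    hasSum_le (fun j => (hpt j).1) hlb hSF'.hasSum
  have hhig : ∑' j, stmt12_Fz' β f x j ≤ β * f (β/2) * (π^2/6 - 1) :=
    hasSum_le (fun j => (hpt j).2) hSF'.hasSum hub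
  have hFeq : stmt12_Fz β f x =
      fun j => stmt12_Fz' β f x j + (if j = -1 then stmt12_Fz β f x (-1) else 0) := by
    funext j
    by_cases h : j = -1
    · subst h; simp [stmt12_Fz']
    · simp [stmt12_Fz', h]
  have hF : HasSum (stmt12_Fz β f x) ((∑' j, stmt12_Fz' β f x j) + stmt12_Fz β f x (-1)) := by
    have h := hSF'.hasSum.add (hasSum_ite_eq (-1 : ℤ) (stmt12_Fz β f x (-1)))
    rwa [← hFeq] at h
  have hFm1 : stmt12_Fz β f x (-1) = (β / (2-x)^2) * f (β/(2-x)) := by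
    simp only [stmt12_Fz]
    rw [if_neg (by norm_num : ¬(-1 : ℤ) = 0)]
    have h1 : 2*(((-1):ℤ):ℝ)+x = -(2-x) := by push_cast; ring
    rw [h1]
    have h2 : (-(2-x))^2 = (2-x)^2 := by ring
    rw [h2, neg_div_neg_eq]
  have hsupp : Function.support (stmt12_Fz β f x) ⊆ {j : ℤ | j ≠ 0} := by
    intro j hj
    simp only [Set.mem_setOf_eq]
    intro h0
    apply hj
    simp [stmt12_Fz, h0]
  have hgoalfun : (fun j : {j : ℤ | j ≠ 0} => stmt12_Fz β f x j) =
      (fun j : {j : ℤ // j ≠ 0} =>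
        (β / (2 * ((j : ℤ) : ℝ) + x) ^ 2) * f (-β / (2 * ((j : ℤ) : ℝ) + x))) := by
    funext j
    simp only [stmt12_Fz]
    rw [if_neg j.2]
  have hsub : HasSum (fun j : {j : ℤ // j ≠ 0} =>
      (β / (2 * ((j : ℤ) : ℝ) + x) ^ 2) * f (-β / (2 * ((j : ℤ) : ℝ) + x)))
      ((∑' j, stmt12_Fz' β f x j) + stmt12_Fz β f x (-1)) := by
    rw [← hgoalfun]
    exact (hasSum_subtype_iff_of_support_subset hsupp).mpr hF
  have hT : Tsub β f x = (∑' j, stmt12_Fz' β f x j) + stmt12_Fz β f x (-1) := hsub.tsum_eq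
  refine ⟨hsub.summable, ?_, ?_⟩
  · rw [hT, hFm1]
    have h : (∑' j, stmt12_Fz' β f x j) + (β / (2-x)^2) * f (β/(2-x))
        - (β / (2-x)^2) * f (β/(2-x)) = ∑' j, stmt12_Fz' β f x j := by ring
    rw [h]
    linarith [hlow]
  · rw [hT, hFm1]
    have h : (∑' j, stmt12_Fz' β f x j) + (β / (2-x)^2) * f (β/(2-x))
        - (β / (2-x)^2) * f (β/(2-x)) = ∑' j, stmt12_Fz' β f x j := by ring
    rw [h]
    linarith [hhig]

lemma stmt12_arg_mem (j : ℤ) (hj : j ≠ 0) {β x : ℝ} (hβ0 : 0 < β) (hβ1 : β ≤ 1)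
    (hx1 : -1 < x) (hx2 : x < 1) : β / (2*(j:ℝ)+x) ∈ Set.Ioo (-1:ℝ) 1 := by
  rcases lt_or_ge 0 j with h | h
  · have hj1 : (1:ℝ) ≤ (j:ℝ) := by exact_mod_cast h
    have hd : 1 < 2*(j:ℝ)+x := by linarith
    constructor
    · have : 0 < β/(2*(j:ℝ)+x) := by positivity
      linarith
    · rw [div_lt_one (by linarith)]; linarith
  · have hj1 : j ≤ -1 := by omega
    have hj1' : (j:ℝ) ≤ -1 := by exact_mod_cast hj1
    have hd : 2*(j:ℝ)+x < -1 := by linarith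
    constructor
    · have h1 : β / -(2*(j:ℝ)+x) < 1 := by rw [div_lt_one (by linarith)]; linarith
      have h2 : β/(2*(j:ℝ)+x) = -(β / -(2*(j:ℝ)+x)) := by rw [div_neg, neg_neg]
      rw [h2]; linarith
    · have : β/(2*(j:ℝ)+x) < 0 := div_neg_of_pos_of_neg hβ0 (by linarith)
      linarith

end Stmt12Aux

/-- Basic size estimate for `T_β f` when `f` is nonnegative, even, and
nondecreasing on `[0,1)`. -/
theorem stmt_12 (β : ℝ) (hβ0 : 0 < β) (hβ1 : β ≤ 1)
    (f : ℝ → ℝ)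
    (hnn : ∀ x ∈ Set.Ioo (-1 : ℝ) 1, 0 ≤ f x)
    (heven : ∀ x ∈ Set.Ioo (-1 : ℝ) 1, f (-x) = f x)
    (hmono : MonotoneOn f (Set.Ico (0 : ℝ) 1)) :
    ∀ x ∈ Set.Ioo (-1 : ℝ) 1,
      Summable (fun j : {j : ℤ // j ≠ 0} =>
        (β / (2 * ((j : ℤ) : ℝ) + x) ^ 2) * f (-β / (2 * ((j : ℤ) : ℝ) + x))) ∧
      β * (π ^ 2 / 6 - 5 / 4) * f 0 ≤
        Tsub β f x - (β / (2 - |x|) ^ 2) * f (β / (2 - |x|)) ∧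
      Tsub β f x - (β / (2 - |x|) ^ 2) * f (β / (2 - |x|)) ≤
        β * (π ^ 2 / 6 - 1) * f (β / 2) := by
  intro x hx
  obtain ⟨hx1, hx2⟩ := hx
  rcases le_or_gt 0 x with hx0 | hx0
  · rw [abs_of_nonneg hx0]
    exact stmt12_key hβ0 hβ1 hnn heven hmono hx0 hx2
  · rw [abs_of_neg hx0]
    have hy0 : (0:ℝ) ≤ -x := by linarith
    have hy1 : -x < 1 := by linarith
    obtain ⟨hS, h1, h2⟩ := stmt12_key hβ0 hβ1 hnn heven hmono hy0 hy1
    set e : {j : ℤ // j ≠ 0} ≃ {j : ℤ // j ≠ 0} :=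
      ⟨fun j => ⟨-j.1, neg_ne_zero.mpr j.2⟩, fun j => ⟨-j.1, neg_ne_zero.mpr j.2⟩,
       fun j => by simp, fun j => by simp⟩ with he
    have hfe : (fun j : {j : ℤ // j ≠ 0} =>
        (β / (2 * ((j : ℤ) : ℝ) + x) ^ 2) * f (-β / (2 * ((j : ℤ) : ℝ) + x))) =
        (fun j : {j : ℤ // j ≠ 0} =>
        (β / (2 * ((j : ℤ) : ℝ) + -x) ^ 2) * f (-β / (2 * ((j : ℤ) : ℝ) + -x))) ∘ e := by
      funext j
      have hv : (((e j : {j : ℤ // j ≠ 0}) : ℤ) : ℝ) = -((j : ℤ) : ℝ) := by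
        simp [he]
      simp only [Function.comp_apply, hv]
      have hd : 2 * (-((j:ℤ):ℝ)) + -x = -(2*((j:ℤ):ℝ)+x) := by ring
      rw [hd]
      have hsq : (-(2*((j:ℤ):ℝ)+x))^2 = (2*((j:ℤ):ℝ)+x)^2 := by ring
      rw [hsq, neg_div_neg_eq]
      rw [neg_div, heven _ (stmt12_arg_mem j.1 j.2 hβ0 hβ1 hx1 hx2)]
    have hTs : Tsub β f x = Tsub β f (-x) := by
      unfold Tsub
      rw [hfe]
      simp only [Function.comp_def]
      exact e.tsum_eq (fun j : {j : ℤ // j ≠ 0} =>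
        (β / (2 * ((j : ℤ) : ℝ) + -x) ^ 2) * f (-β / (2 * ((j : ℤ) : ℝ) + -x)))
    refine ⟨?_, ?_, ?_⟩
    · rw [hfe]
      exact e.summable_iff.mpr hS
    · rw [hTs]
      exact h1
    · rw [hTs]
      exact h2
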